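/- Let P(t) be a solution of the matrix ODE dP/dt = −(P*)^{-1}P − P(P*)^{-1} + 2 I_n with P(0) symmetric positive definite and P* symmetric positive definite. Then P(t) → P* as t → ∞. -/

import Mathlib

open Matrix BigOperators Filter

attribute [local instance] Matrix.normedAddCommGroup Matrix.normedSpace

theorem scalar_ode_tendsto (c b : ℝ) (hc : 0 < c) (f : ℝ → ℝ)
    (hf : ∀ t, HasDerivAt f (-c * f t + b) t) :
    Tendsto f atTop (nhds (b / c)) := by
  set g : ℝ → ℝ := fun t => Real.exp (c * t) * (f t - b / c) with hg
  have hg' : ∀ t, HasDerivAt g 0 t := by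
    intro t
    have h1 : HasDerivAt (fun t : ℝ => Real.exp (c * t)) (Real.exp (c * t) * c) t :=
      by simpa using ((hasDerivAt_id t).const_mul c).exp
    have h2 : HasDerivAt (fun t => f t - b / c) (-c * f t + b) t := (hf t).sub_const _
    have : HasDerivAt g (Real.exp (c * t) * c * (f t - b / c) + Real.exp (c * t) * (-c * f t + b)) t :=
      h1.fun_mul h2
    convert this using 1
    have hcne : c ≠ 0 := ne_of_gt hc
    have hcb : c * (b / c) = b := mul_div_cancel₀ b hcne
    linear_combination (Real.exp (c * t)) * hcb
  have hconst : ∀ t, g t = g 0 := by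
    intro t
    exact is_const_of_deriv_eq_zero (fun x => (hg' x).differentiableAt)
      (fun x => (hg' x).deriv) t 0
  have hform : ∀ t, f t = Real.exp (-(c * t)) * (f 0 - b / c) + b / c := by
    intro t
    have h0 : g 0 = f 0 - b / c := by simp [hg]
    have ht := hconst t
    rw [h0, hg] at ht
    have hexp : Real.exp (c * t) ≠ 0 := Real.exp_ne_zero _
    have hkey : f t - b / c = Real.exp (-(c * t)) * (f 0 - b / c) := by
      rw [Real.exp_neg, inv_mul_eq_div, eq_div_iff hexp, mul_comm]
      exact ht
    linarith [hkey]
  have hlim : Tendsto (fun t => Real.exp (-(c * t)) * (f 0 - b / c) + b / c) atTop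
      (nhds (0 * (f 0 - b / c) + b / c)) := by
    apply Tendsto.add_const
    apply Tendsto.mul_const
    exact Real.tendsto_exp_atBot.comp (tendsto_neg_atTop_atBot.comp (tendsto_id.const_mul_atTop hc))
  rw [zero_mul, zero_add] at hlim
  exact hlim.congr fun t => (hform t).symm

theorem hasDerivAt_conj_matrix {n : ℕ} (A B : Matrix (Fin n) (Fin n) ℝ)
    (P : ℝ → Matrix (Fin n) (Fin n) ℝ) (M : Matrix (Fin n) (Fin n) ℝ) (t : ℝ)
    (h : HasDerivAt P M t) : HasDerivAt (fun t => A * P t * B) (A * M * B) t := by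
  have hentry : ∀ i j, HasDerivAt (fun t => P t i j) (M i j) t := fun i j =>
    hasDerivAt_pi.1 (hasDerivAt_pi.1 h i) j
  refine hasDerivAt_pi.2 ?_
  intro i
  refine hasDerivAt_pi.2 ?_
  intro j
  show HasDerivAt (fun t => (A * P t * B) i j) ((A * M * B) i j) t
  have : HasDerivAt (fun t => ∑ x, (∑ k, A i k * P t k x) * B x j)
      (∑ x, (∑ k, A i k * M k x) * B x j) t := by
    apply HasDerivAt.fun_sum
    intro x _
    apply HasDerivAt.mul_const
    apply HasDerivAt.fun_sum
    intro k _
    exact (hentry k x).const_mul _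
  convert this using 2 <;> simp [Matrix.mul_apply]

/-- Any solution of the matrix ODE
`dP/dt = -(P*)⁻¹ P - P (P*)⁻¹ + 2 Iₙ` with `P(0)` and `P*` symmetric positive definite
converges to `P*` as `t → ∞`. -/
theorem covariance_ODE_convergence (n : ℕ)
    (Pstar : Matrix (Fin n) (Fin n) ℝ) (hPstar : Pstar.PosDef)
    (P : ℝ → Matrix (Fin n) (Fin n) ℝ) (hP0 : (P 0).PosDef)
    (hODE : ∀ t, HasDerivAt P (-(Pstar⁻¹ * P t) - P t * Pstar⁻¹ + (2 : ℝ) • 1) t) :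
    Tendsto P atTop (nhds Pstar) := by
  classical
  set U : Matrix (Fin n) (Fin n) ℝ := (hPstar.1.eigenvectorUnitary : Matrix (Fin n) (Fin n) ℝ)
    with hUdef
  set V : Matrix (Fin n) (Fin n) ℝ := star U with hVdef
  set e : Fin n → ℝ := hPstar.1.eigenvalues with hedef
  have he : ∀ i, 0 < e i := fun i => hPstar.eigenvalues_pos i
  have hspec : Pstar = U * diagonal e * V := by simpa using hPstar.1.spectral_theorem
  have hVU : V * U = 1 := Matrix.mem_unitaryGroup_iff'.mp (hPstar.1.eigenvectorUnitary).2
  have hUV : U * V = 1 := Matrix.mem_unitaryGroup_iff.mp (hPstar.1.eigenvectorUnitary).2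
  set Dinv : Matrix (Fin n) (Fin n) ℝ := diagonal (fun i => (e i)⁻¹) with hDinvdef
  have hinv : Pstar⁻¹ = U * Dinv * V := by
    apply Matrix.inv_eq_left_inv
    rw [hspec]
    have : (U * Dinv * V) * (U * diagonal e * V) = U * (Dinv * (V * U) * diagonal e) * V := by
      noncomm_ring
    rw [this, hVU, mul_one, hDinvdef, diagonal_mul_diagonal]
    have : (fun i => (e i)⁻¹ * e i) = fun _ => (1 : ℝ) := by
      funext i; exact inv_mul_cancel₀ (he i).ne'
    rw [this, diagonal_one, mul_one, hUV]
  set Q : ℝ → Matrix (Fin n) (Fin n) ℝ := fun t => V * P t * U with hQdef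
  have hcancel : ∀ X : Matrix (Fin n) (Fin n) ℝ, V * (U * X) = X := by
    intro X; rw [← mul_assoc, hVU, one_mul]
  have hQderiv : ∀ t, HasDerivAt Q (-(Dinv * Q t) - Q t * Dinv + (2 : ℝ) • 1) t := by
    intro t
    have h1 := hasDerivAt_conj_matrix V U P _ t (hODE t)
    convert h1 using 1
    rw [hinv]
    simp only [hQdef, Matrix.mul_sub, Matrix.sub_mul, Matrix.mul_add, Matrix.add_mul,
      Matrix.neg_mul, Matrix.mul_neg, Matrix.smul_mul, Matrix.mul_smul, Matrix.mul_one,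
      Matrix.one_mul, Matrix.mul_assoc, hcancel, hVU]
  have hQentry : ∀ i j, Tendsto (fun t => Q t i j) atTop (nhds (diagonal e i j)) := by
    intro i j
    have hc : 0 < (e i)⁻¹ + (e j)⁻¹ := by
      have h1 := he i
      have h2 := he j
      positivity
    have hderiv : ∀ t, HasDerivAt (fun t => Q t i j)
        (-((e i)⁻¹ + (e j)⁻¹) * Q t i j + (if i = j then (2 : ℝ) else 0)) t := by
      intro t
      have : HasDerivAt (fun t => Q t i j) ((-(Dinv * Q t) - Q t * Dinv + (2 : ℝ) • 1) i j) t :=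
        hasDerivAt_pi.1 (hasDerivAt_pi.1 (hQderiv t) i) j
      convert this using 1
      simp only [Matrix.add_apply, Matrix.sub_apply, Matrix.neg_apply, Matrix.smul_apply,
        Matrix.diagonal_mul, Matrix.mul_diagonal, Matrix.one_apply, hDinvdef, smul_eq_mul]
      by_cases hij : i = j <;> simp [hij] <;> ring
    have := scalar_ode_tendsto _ _ hc _ hderiv
    convert this using 2
    rw [Matrix.diagonal_apply]
    by_cases hij : i = j
    · subst hij
      simp only [if_pos rfl]
      rw [eq_div_iff (ne_of_gt hc), mul_add]
      simp [mul_inv_cancel₀ (he i).ne']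
      norm_num
    · simp [hij]
  have hQtendsto : Tendsto Q atTop (nhds (diagonal e)) := by
    refine tendsto_pi_nhds.2 ?_; intro i; refine tendsto_pi_nhds.2 ?_; intro j; exact hQentry i j
  have hcont : Continuous fun X : Matrix (Fin n) (Fin n) ℝ => U * X * V :=
    (continuous_const.matrix_mul continuous_id).matrix_mul continuous_const
  have hfinal : Tendsto (fun t => U * Q t * V) atTop (nhds (U * diagonal e * V)) :=
    (hcont.tendsto (diagonal e)).comp hQtendsto
  have hPQ : (fun t => U * Q t * V) = P := by
    funext t
    simp only [hQdef]
    calc U * (V * P t * U) * V = (U * V) * P t * (U * V) := by noncomm_ring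
    _ = P t := by rw [hUV, one_mul, mul_one]
  rw [hPQ, ← hspec] at hfinal
  exact hfinal
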